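/- Let g(n) denote the parity of the number of 1's in the negabinary representation of n. The real number 0.G = Σ_{n≥1} g(n) · 2^{−(n+1)} (the binary number whose digits after the point are g(0), g(1), g(2), …) is irrational. -/

import Mathlib

/-- Digits of the negabinary (base -2) representation, least significant first. -/
def negaDigits (n : ℤ) : List ℕ :=
  if n = 0 then [] else (n % 2).toNat :: negaDigits ((n % 2 - n) / 2)
termination_by 2 * n.natAbs + (if n < 0 then 1 else 0)
decreasing_by split_ifs <;> omega

/-- Parity of the number of 1's in the negabinary representation of n. -/
def g (n : ℕ) : ℕ := (negaDigits n).sum % 2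

/-- The digit at position i in the negabinary representation. -/
def negaDigit (n : ℤ) (i : ℕ) : ℕ := (negaDigits n).getD i 0

/-- Number of runs (maximal blocks) of 1's in the binary representation of n. -/
def runsOfOnes (n : ℕ) : ℕ :=
  ((Finset.range (n + 1)).filter (fun i => n.testBit i ∧ ¬ n.testBit (i + 1))).card

/-- Parity of the number of runs of 1's in the binary representation of n. -/
def r (n : ℕ) : ℕ := runsOfOnes n % 2

lemma nega_eq (n : ℤ) (h : n ≠ 0) :
    negaDigits n = (n % 2).toNat :: negaDigits ((n % 2 - n) / 2) := by
  rw [negaDigits]; simp [h]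

noncomputable def Gz (n : ℤ) : ZMod 2 := ((negaDigits n).sum : ZMod 2)

lemma gz_two_mul (m : ℤ) : Gz (2*m) = Gz (-m) := by
  rcases eq_or_ne m 0 with rfl | hm
  · simp
  · unfold Gz
    rw [nega_eq (2*m) (by omega)]
    have h1 : (2*m) % 2 = 0 := by omega
    have h2 : (0 - 2*m)/2 = -m := by omega
    rw [h1, h2]
    simp

lemma gz_odd (m : ℤ) : Gz (2*m+1) = 1 + Gz (-m) := by
  unfold Gz
  rw [nega_eq (2*m+1) (by omega)]
  have h1 : (2*m+1) % 2 = 1 := by omega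
  have h2 : (1 - (2*m+1))/2 = -m := by omega
  rw [h1, h2]
  simp

noncomputable def A (n : ℕ) : ZMod 2 := (g n : ZMod 2)

lemma A_eq_Gz (n : ℕ) : A n = Gz (n : ℤ) := by
  unfold A g Gz
  exact ZMod.natCast_mod _ 2

lemma g_lt_two (n : ℕ) : g n < 2 := Nat.mod_lt _ (by norm_num)

lemma A_inj {a b : ℕ} (h : A a = A b) : g a = g b := by
  unfold A at h
  rw [ZMod.natCast_eq_natCast_iff] at h
  have h2 : g a % 2 = g b % 2 := h
  have := g_lt_two a; have := g_lt_two b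
  omega

lemma R1 (m : ℕ) : A (2*m+1) = 1 + A (2*m) := by
  rw [A_eq_Gz, A_eq_Gz]
  push_cast
  rw [gz_odd, gz_two_mul]

lemma R2 (k : ℕ) : A (4*k) = A k := by
  rw [A_eq_Gz, A_eq_Gz]
  push_cast
  have h1 : (4*(k:ℤ)) = 2*(2*k) := by ring
  have h2 : -(2*(k:ℤ)) = 2*(-k) := by ring
  rw [h1, gz_two_mul, h2, gz_two_mul, neg_neg]

lemma R3 (k : ℕ) : A (4*k+2) = 1 + A (k+1) := by
  rw [A_eq_Gz, A_eq_Gz]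
  push_cast
  have h1 : (4*(k:ℤ)+2) = 2*(2*k+1) := by ring
  have h2 : -(2*(k:ℤ)+1) = 2*(-(k+1))+1 := by ring
  rw [h1, gz_two_mul, h2, gz_odd, neg_neg]

lemma R4 (k : ℕ) : A (4*k+3) = A (k+1) := by
  rw [A_eq_Gz, A_eq_Gz]
  push_cast
  have h1 : (4*(k:ℤ)+3) = 2*(2*k+1)+1 := by ring
  have h2 : -(2*(k:ℤ)+1) = 2*(-(k+1))+1 := by ring
  rw [h1, gz_odd, h2, gz_odd, neg_neg]
  have : (1 : ZMod 2) + 1 = 0 := by decide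
  rw [← add_assoc, this, zero_add]

lemma zmod_ne_one_add (a : ZMod 2) : a ≠ 1 + a := by
  intro h
  have := right_eq_add.mp h
  simp at this

lemma aperiodic : ∀ p, 1 ≤ p → ∀ N, ¬ (∀ n, N ≤ n → g (n + p) = g n) := by
  intro p
  induction p using Nat.strong_induction_on with
  | _ p ih =>
  intro hp N h
  have hA : ∀ n, N ≤ n → A (n + p) = A n := by
    intro n hn; unfold A; rw [h n hn]
  rcases Nat.even_or_odd p with ⟨m, hm⟩ | ⟨q, hq⟩
  · -- p even, p = 2m
    have hm1 : 1 ≤ m := by omega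
    rcases Nat.even_or_odd m with ⟨m', hm'⟩ | ⟨m', hm'⟩
    · -- m = 2m'
      have hm'1 : 1 ≤ m' := by omega
      refine ih m' (by omega) hm'1 N ?_
      intro k hk
      apply A_inj
      have e1 : A (4*(k+m')) = A (k+m') := R2 (k+m')
      have e2 : 4*(k+m') = 4*k + p := by omega
      rw [e2] at e1
      rw [hA (4*k) (by omega)] at e1
      rw [R2 k] at e1
      exact e1.symm
    · -- m = 2m'+1
      have anti : ∀ k, N ≤ k → A k = 1 + A (k + (m'+1)) := by
        intro k hk
        have e1 : A (4*k + p) = A (4*k) := hA (4*k) (by omega)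
        have e2 : 4*k + p = 4*(k+m') + 2 := by omega
        rw [e2, R3 (k+m'), R2 k] at e1
        have e3 : k + m' + 1 = k + (m'+1) := by omega
        rw [e3] at e1
        exact e1.symm
      rcases Nat.eq_zero_or_pos m' with h1 | h1
      · -- m' = 0, p = 2
        subst h1
        have e1 : A (4*N+3) = A (N+1) := R4 N
        have e2 : A (4*N+4) = A (N+1) := by
          have : 4*N+4 = 4*(N+1) := by omega
          rw [this]; exact R2 (N+1)
        have e3 : A (4*N+3) = 1 + A (4*N+3 + (0+1)) := anti (4*N+3) (by omega)
        have e4 : 4*N+3 + (0+1) = 4*N+4 := by omega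
        rw [e4, e2, e1] at e3
        exact zmod_ne_one_add _ e3
      · -- m' ≥ 1
        refine ih (2*(m'+1)) (by omega) (by omega) N ?_
        intro k hk
        apply A_inj
        have e1 := anti k hk
        have e2 := anti (k + (m'+1)) (by omega)
        rw [e2, ← add_assoc] at e1
        have ht : (1:ZMod 2) + 1 = 0 := by decide
        rw [ht, zero_add] at e1
        have e3 : k + (m'+1) + (m'+1) = k + 2*(m'+1) := by omega
        rw [e3] at e1
        exact e1.symm
  · -- p odd, p = 2q+1
    have ev : ∀ j, N ≤ j → A (2*j+2) = A (2*j) := by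
      intro j hj
      have i1 : ∀ j', N ≤ j' → (1 : ZMod 2) + A (2*(j'+q)) = A (2*j') := by
        intro j' hj'
        have e := hA (2*j') (by omega)
        have e2 : 2*j' + p = 2*(j'+q)+1 := by omega
        rw [e2, R1 (j'+q)] at e
        exact e
      have i2 : A (2*(j+q+1)) = 1 + A (2*j) := by
        have e := hA (2*j+1) (by omega)
        have e2 : 2*j+1 + p = 2*(j+q+1) := by omega
        rw [e2, R1 j] at e
        exact e
      have i3 := i1 (j+1) (by omega)
      have e4 : j+1+q = j+q+1 := by omega
      rw [e4, i2, ← add_assoc] at i3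
      have : (1:ZMod 2) + 1 = 0 := by decide
      rw [this, zero_add] at i3
      have e5 : 2*(j+1) = 2*j+2 := by omega
      rw [e5] at i3
      exact i3.symm
    have const : ∀ j, N ≤ j → A (2*j) = A (2*N) := by
      intro j hj
      induction j, hj using Nat.le_induction with
      | base => rfl
      | succ j hj ihj =>
        have := ev j hj
        have e : 2*(j+1) = 2*j+2 := by omega
        rw [e, this, ihj]
    have e1 : A (4*(2*N+1)+2) = 1 + A ((2*N+1)+1) := R3 (2*N+1)
    have e2 : 4*(2*N+1)+2 = 2*(4*N+3) := by omega
    have e3 : (2*N+1)+1 = 2*(N+1) := by omega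
    rw [e2, e3, const (4*N+3) (by omega), const (N+1) (by omega)] at e1
    exact zmod_ne_one_add _ e1

lemma exists_zero (k : ℕ) : ∃ j, g (j + k) = 0 := by
  have h1 := g_lt_two (2*k)
  rcases (by omega : g (2*k) = 0 ∨ g (2*k) = 1) with h | h
  · exact ⟨k, by rw [show k + k = 2*k by omega]; exact h⟩
  · refine ⟨k+1, ?_⟩
    have hA : A (2*k) = 1 := by unfold A; rw [h]; norm_num
    have hA1 : A (2*k+1) = 0 := by
      rw [R1, hA]; decide
    have h2 := g_lt_two (2*k+1)
    rcases (by omega : g (2*k+1) = 0 ∨ g (2*k+1) = 1) with h' | h'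
    · rw [show k+1+k = 2*k+1 by omega]; exact h'
    · exfalso
      have : A (2*k+1) = 1 := by unfold A; rw [h']; norm_num
      rw [hA1] at this
      exact (by decide : (0:ZMod 2) ≠ 1) this

noncomputable def T (k : ℕ) : ℝ := ∑' n, (g (n+k) : ℝ) / 2^(n+1)

lemma summable_tail (k : ℕ) : Summable (fun n => (g (n+k):ℝ)/2^(n+1)) := by
  have hs : Summable (fun n : ℕ => (1:ℝ)/2^(n+1)) := by
    have := summable_geometric_two' 1
    apply this.congr
    intro n
    norm_num [pow_succ]
    ring
  refine Summable.of_nonneg_of_le (fun n => by positivity) (fun n => ?_) hs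
  gcongr
  exact_mod_cast Nat.lt_succ_iff.mp (g_lt_two (n+k))

lemma T_nonneg (k : ℕ) : 0 ≤ T k := tsum_nonneg (fun n => by positivity)

lemma T_rec (k : ℕ) : T k = ((g k : ℝ) + T (k+1))/2 := by
  unfold T
  rw [Summable.tsum_eq_zero_add (summable_tail k)]
  have h1 : ∀ n : ℕ, (g (n+1+k):ℝ)/2^(n+1+1) = (1/2) * ((g (n+(k+1)):ℝ)/2^(n+1)) := by
    intro n
    have : n+1+k = n+(k+1) := by omega
    rw [this]
    ring
  rw [tsum_congr h1, tsum_mul_left]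
  simp
  ring

lemma one_eq_tsum : ∑' n : ℕ, (1:ℝ)/2^(n+1) = 1 := by
  have h := tsum_geometric_two' (1:ℝ)
  calc ∑' n : ℕ, (1:ℝ)/2^(n+1) = ∑' n : ℕ, (1:ℝ)/2/2^n :=
        tsum_congr (fun n => by rw [pow_succ]; ring)
    _ = 1 := h

lemma T_lt_one (k : ℕ) : T k < 1 := by
  obtain ⟨j, hj⟩ := exists_zero k
  rw [← one_eq_tsum]
  have hs : Summable (fun n : ℕ => (1:ℝ)/2^(n+1)) := by
    have := summable_geometric_two' 1
    apply this.congr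
    intro n
    norm_num [pow_succ]
    ring
  refine Summable.tsum_lt_tsum (i := j) (fun n => ?_) ?_ (summable_tail k) hs
  · gcongr
    show ((g (n+k) : ℕ) : ℝ) ≤ 1
    exact_mod_cast Nat.lt_succ_iff.mp (g_lt_two (n+k))
  · rw [hj]
    simp only [Nat.cast_zero, zero_div]
    positivity

noncomputable def M : ℕ → ℕ
  | 0 => 0
  | k+1 => 2 * M k + g k

lemma M_eq (k : ℕ) : (M k : ℝ) + T k = 2^k * T 0 := by
  induction k with
  | zero => simp [M]
  | succ k ihk =>
    have h2 : 2 * T k = (g k : ℝ) + T (k+1) := by rw [T_rec k]; ring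
    have : (M (k+1) : ℝ) = 2 * M k + g k := by simp [M]
    rw [this]
    calc (2 * (M k:ℝ) + g k) + T (k+1) = 2 * ((M k:ℝ) + T k) := by linarith
    _ = 2^(k+1) * T 0 := by rw [ihk]; try ring

lemma T_step {a b : ℕ} (hab : T a = T b) : g a = g b ∧ T (a+1) = T (b+1) := by
  have ha := T_rec a
  have hb := T_rec b
  have key : (g a : ℝ) + T (a+1) = (g b:ℝ) + T (b+1) := by
    rw [hab] at ha; linarith
  have t1 := T_nonneg (a+1); have t2 := T_lt_one (a+1)
  have t3 := T_nonneg (b+1); have t4 := T_lt_one (b+1)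
  have ha2 := g_lt_two a; have hb2 := g_lt_two b
  have e1 : g a = g b := by
    interval_cases h : g a <;> interval_cases h' : g b <;> simp_all <;> linarith
  refine ⟨e1, ?_⟩
  rw [e1] at key
  linarith

theorem T0_irrational : Irrational (T 0) := by
  rw [Irrational]
  rintro ⟨q, hq⟩
  set d : ℤ := (q.den : ℤ) with hd
  have hd0 : 0 < d := by rw [hd]; exact_mod_cast q.pos
  set rr : ℕ → ℚ := fun k => 2^k * q - M k with hrr
  have hr : ∀ k, ((rr k : ℚ) : ℝ) = T k := by
    intro k
    have := M_eq k
    simp only [hrr]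
    push_cast
    rw [hq]
    linarith
  set z : ℕ → ℤ := fun k => 2^k * q.num - M k * d with hzz
  have hz : ∀ k, ((z k : ℤ) : ℚ) = d * rr k := by
    intro k
    simp only [hzz, hrr, hd]
    push_cast
    have : (q.den : ℚ) * q = q.num := by
      rw [mul_comm]; exact_mod_cast Rat.mul_den_eq_num q
    rw [mul_sub]
    rw [show (q.den:ℚ) * (2^k * q) = 2^k * ((q.den:ℚ) * q) by ring, this]
    ring
  have hrb : ∀ k, 0 ≤ rr k ∧ rr k < 1 := by
    intro k
    constructor
    · have : (0:ℝ) ≤ ((rr k : ℚ):ℝ) := by rw [hr k]; exact T_nonneg k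
      exact_mod_cast this
    · have : ((rr k : ℚ):ℝ) < 1 := by rw [hr k]; exact T_lt_one k
      exact_mod_cast this
  have hzb : ∀ k, z k ∈ Finset.Ico (0:ℤ) d := by
    intro k
    obtain ⟨h1, h2⟩ := hrb k
    rw [Finset.mem_Ico]
    constructor
    · have : (0:ℚ) ≤ (z k : ℚ) := by rw [hz k]; positivity
      exact_mod_cast this
    · have : (z k : ℚ) < d := by
        rw [hz k]
        calc (d:ℚ) * rr k < (d:ℚ) * 1 := by
              apply mul_lt_mul_of_pos_left h2
              exact_mod_cast hd0
        _ = d := mul_one _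
      exact_mod_cast this
  obtain ⟨k1, hk1, k2, hk2, hne, heq⟩ :=
    Finset.exists_ne_map_eq_of_card_lt_of_maps_to
      (s := Finset.range (d.toNat + 1)) (t := Finset.Ico (0:ℤ) d)
      (by simp) (fun k _ => hzb k)
  wlog hlt : k1 < k2 generalizing k1 k2
  · exact this k2 hk2 k1 hk1 hne.symm heq.symm (by omega)
  have hT : T k1 = T k2 := by
    rw [← hr k1, ← hr k2]
    congr 1
    have : (z k1 : ℚ) = (z k2 : ℚ) := by exact_mod_cast heq
    rw [hz k1, hz k2] at this
    exact mul_left_cancel₀ (by exact_mod_cast hd0.ne') this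
  have Teq : ∀ j, T (k1 + j) = T (k2 + j) := by
    intro j
    induction j with
    | zero => simpa using hT
    | succ j ihj =>
      have := (T_step ihj).2
      have e1 : k1 + j + 1 = k1 + (j+1) := by omega
      have e2 : k2 + j + 1 = k2 + (j+1) := by omega
      rwa [e1, e2] at this
  refine aperiodic (k2 - k1) (by omega) k1 ?_
  intro n hn
  have := Teq (n - k1)
  have e1 : k1 + (n - k1) = n := by omega
  have e2 : k2 + (n - k1) = n + (k2 - k1) := by omega
  rw [e1, e2] at this
  exact (T_step this).1.symm

theorem stmt14 : Irrational (∑' n : ℕ, (g n : ℝ) / 2 ^ (n + 1)) := by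
  have h : (∑' n : ℕ, (g n : ℝ) / 2 ^ (n + 1)) = T 0 :=
    tsum_congr (fun n => by norm_num)
  rw [h]
  exact T0_irrational
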